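/- Let u₀ be a Schwartz function on ℝ² with Fourier transform û₀(ξ,η) = ∫_{ℝ²} u₀(X,Y) e^{−i(Xξ+Yη)} dX dY. Define v(τ,ξ,η) := e^{Φ(τ,ξ,η)} û₀(ξ₀(τ,ξ,η), η₀(τ,ξ,η)), where ξ₀(τ,ξ,η) = ((3ξ−√3η)/2) e^{−τ/2} + ((−ξ+√3η)/2) e^{−3τ/2}, η₀(τ,ξ,η) = ((√3ξ−η)/2) e^{−τ/2} + ((−√3ξ+3η)/2) e^{−3τ/2}, and Φ(τ,ξ,η) = −(1−e^{−τ})³ ξ² − 2√3 e^{−τ}(1−e^{−τ})² ξη − (1−e^{−τ})(1+3e^{−2τ}) η². Then v(0,·,·) = û₀ and for all τ ≥ 0 and (ξ,η) ∈ ℝ²: ∂_τ v + (√3/2) η ∂_ξ v + (2η − (√3/2) ξ) ∂_η v = −4 η² v. -/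

import Mathlib

open MeasureTheory SchwartzMap

/-- The Fourier transform `f̂(ξ,η) = ∫ f(X,Y) e^{-i(Xξ + Yη)} dX dY`. -/
noncomputable def ft2 (f : ℝ × ℝ → ℂ) (ξ η : ℝ) : ℂ :=
  ∫ p : ℝ × ℝ, f p * Complex.exp (-Complex.I * ((p.1 * ξ + p.2 * η : ℝ) : ℂ))

set_option synthInstance.maxHeartbeats 1000000 in
/-- The rescaled duality pairing on `ℝ × ℝ`. -/
noncomputable def myL : (ℝ × ℝ) →L[ℝ] (ℝ × ℝ) →L[ℝ] ℝ :=
  (2 * Real.pi)⁻¹ • ((ContinuousLinearMap.fst ℝ ℝ ℝ).smulRight (ContinuousLinearMap.fst ℝ ℝ ℝ) +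
    (ContinuousLinearMap.snd ℝ ℝ ℝ).smulRight (ContinuousLinearMap.snd ℝ ℝ ℝ))

set_option synthInstance.maxHeartbeats 1000000 in
set_option maxHeartbeats 1000000 in
lemma myL_apply (v w : ℝ × ℝ) : myL v w = (2 * Real.pi)⁻¹ * (v.1 * w.1 + v.2 * w.2) := by
  simp [myL, ContinuousLinearMap.smulRight_apply, smul_eq_mul]
  ring_nf

lemma ft2_eq (f : ℝ × ℝ → ℂ) (a b : ℝ) :
    ft2 f a b =
      VectorFourier.fourierIntegral Real.fourierChar volume myL.toLinearMap₁₂ f (a, b) := by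
  rw [ft2, VectorFourier.fourierIntegral]
  congr 1
  ext p
  rw [ContinuousLinearMap.toLinearMap₁₂_apply_apply_apply, Circle.smul_def, Real.fourierChar_apply, myL_apply]
  rw [show 2 * Real.pi * -((2 * Real.pi)⁻¹ * (p.1 * a + p.2 * b)) = -(p.1 * a + p.2 * b) by
    have := Real.pi_ne_zero; field_simp]
  rw [mul_comm]
  congr 1
  push_cast
  ring

/-- The Fourier-side solution `v(τ,ξ,η) = e^{Φ(τ,ξ,η)} û₀(ξ₀(τ,ξ,η), η₀(τ,ξ,η))` of the
equation generated by the Fokker–Planck-type operator `L_∞` satisfies `v(0,·,·) = û₀` and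
`∂_τ v + (√3/2) η ∂_ξ v + (2η - (√3/2) ξ) ∂_η v = -4η² v` for all `τ ≥ 0`. -/
theorem stmt_17 (u₀ : 𝓢(ℝ × ℝ, ℝ)) :
    let hatU : ℝ → ℝ → ℂ := fun ξ η => ft2 (fun p => (u₀ p : ℂ)) ξ η
    let ξ₀ : ℝ → ℝ → ℝ → ℝ := fun τ ξ η =>
      (3 * ξ - Real.sqrt 3 * η) / 2 * Real.exp (-τ / 2) +
        (-ξ + Real.sqrt 3 * η) / 2 * Real.exp (-(3 * τ) / 2)
    let η₀ : ℝ → ℝ → ℝ → ℝ := fun τ ξ η =>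
      (Real.sqrt 3 * ξ - η) / 2 * Real.exp (-τ / 2) +
        (-(Real.sqrt 3) * ξ + 3 * η) / 2 * Real.exp (-(3 * τ) / 2)
    let Φ : ℝ → ℝ → ℝ → ℝ := fun τ ξ η =>
      -(1 - Real.exp (-τ)) ^ 3 * ξ ^ 2 -
        2 * Real.sqrt 3 * Real.exp (-τ) * (1 - Real.exp (-τ)) ^ 2 * ξ * η -
        (1 - Real.exp (-τ)) * (1 + 3 * Real.exp (-2 * τ)) * η ^ 2
    let v : ℝ → ℝ → ℝ → ℂ := fun τ ξ η =>
      ((Real.exp (Φ τ ξ η) : ℝ) : ℂ) * hatU (ξ₀ τ ξ η) (η₀ τ ξ η)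
    (∀ ξ η : ℝ, v 0 ξ η = hatU ξ η) ∧
    (∀ τ : ℝ, 0 ≤ τ → ∀ ξ η : ℝ,
      deriv (fun s => v s ξ η) τ +
          ((Real.sqrt 3 / 2 * η : ℝ) : ℂ) * deriv (fun ξ' => v τ ξ' η) ξ +
          ((2 * η - Real.sqrt 3 / 2 * ξ : ℝ) : ℂ) * deriv (fun η' => v τ ξ η') η =
        ((-4 * η ^ 2 : ℝ) : ℂ) * v τ ξ η) := by
  intro hatU ξ₀ η₀ Φ v
  have hs : Real.sqrt 3 * Real.sqrt 3 = 3 := Real.mul_self_sqrt (by norm_num)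
  constructor
  · -- initial condition
    intro ξ η
    have h1 : ξ₀ 0 ξ η = ξ := by
      simp only [ξ₀, neg_zero, mul_zero, zero_div, Real.exp_zero, mul_one]
      ring
    have h2 : η₀ 0 ξ η = η := by
      simp only [η₀, neg_zero, mul_zero, zero_div, Real.exp_zero, mul_one]
      ring
    have h3 : Φ 0 ξ η = 0 := by
      simp only [Φ, neg_zero, mul_zero, Real.exp_zero]
      ring
    simp only [v]
    rw [h1, h2, h3, Real.exp_zero, Complex.ofReal_one, one_mul]
  · -- the PDE
    intro τ _ ξ η
    have hint1 : Integrable (fun p : ℝ × ℝ => ((u₀ p : ℝ) : ℂ)) volume := u₀.integrable.ofReal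
    have hint2 : Integrable (fun p : ℝ × ℝ => ‖p‖ * ‖((u₀ p : ℝ) : ℂ)‖) volume := by
      simpa using u₀.integrable_pow_mul volume 1
    set F : (ℝ × ℝ) → ℂ := VectorFourier.fourierIntegral Real.fourierChar volume
        myL.toLinearMap₁₂ (fun p => ((u₀ p : ℝ) : ℂ)) with hF
    obtain ⟨Lp, hLp⟩ : ∃ L : (ℝ × ℝ) →L[ℝ] ℂ, HasFDerivAt F L (ξ₀ τ ξ η, η₀ τ ξ η) :=
      ⟨_, VectorFourier.hasFDerivAt_fourierIntegral myL hint1 hint2 _⟩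
    have hvfun : ∀ t x y, v t x y = ((Real.exp (Φ t x y) : ℝ) : ℂ) * F (ξ₀ t x y, η₀ t x y) := by
      intro t x y
      simp only [v, hatU, ft2_eq, ← hF]
    -- one-variable real derivatives of the exponentials
    have hE : HasDerivAt (fun t : ℝ => Real.exp (-t/2)) (-(1/2) * Real.exp (-τ/2)) τ := by
      refine ((((hasDerivAt_id τ).neg).div_const 2).exp).congr_deriv ?_
      try simp only [id_eq, Pi.neg_apply]
      ring
    have hE3 : HasDerivAt (fun t : ℝ => Real.exp (-(3*t)/2)) (-(3/2) * Real.exp (-(3*τ)/2)) τ := by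
      refine (((((hasDerivAt_id τ).const_mul 3).neg).div_const 2).exp).congr_deriv ?_
      try simp only [id_eq, Pi.neg_apply]
      ring
    have he : HasDerivAt (fun t : ℝ => Real.exp (-t)) (-Real.exp (-τ)) τ := by
      refine (((hasDerivAt_id τ).neg).exp).congr_deriv ?_
      try simp only [id_eq, Pi.neg_apply]
      ring
    have he2 : HasDerivAt (fun t : ℝ => Real.exp (-2*t)) (-2*Real.exp (-2*τ)) τ := by
      refine (((hasDerivAt_id τ).const_mul (-2)).exp).congr_deriv ?_
      try simp only [id_eq, Pi.neg_apply]
      ring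
    -- derivatives of Φ
    have hΦτ : HasDerivAt (fun t => Φ t ξ η)
        (-3*(1-Real.exp (-τ))^2*Real.exp (-τ)*ξ^2
          - 2*Real.sqrt 3*Real.exp (-τ)*(1-Real.exp (-τ))*(3*Real.exp (-τ)-1)*ξ*η
          - (Real.exp (-τ) + 9*Real.exp (-τ)*Real.exp (-2*τ) - 6*Real.exp (-2*τ))*η^2) τ := by
      simp only [Φ]
      have h := ((((he.const_sub 1).pow 3).neg.mul_const (ξ^2)).sub
          ((((he.const_mul (2*Real.sqrt 3)).mul
            ((he.const_sub 1).pow 2)).mul_const ξ).mul_const η)).sub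
          (((he.const_sub 1).mul ((he2.const_mul 3).const_add 1)).mul_const (η^2))
      refine h.congr_deriv ?_
      simp only [Pi.pow_apply]
      ring
    have hΦξ : HasDerivAt (fun x => Φ τ x η)
        (-2*(1-Real.exp (-τ))^3*ξ - 2*Real.sqrt 3*Real.exp (-τ)*(1-Real.exp (-τ))^2*η) ξ := by
      simp only [Φ]
      have h := ((((hasDerivAt_pow 2 ξ).const_mul (-(1 - Real.exp (-τ))^3)).sub
          ((((hasDerivAt_id ξ).const_mul
            (2*Real.sqrt 3*Real.exp (-τ)*(1 - Real.exp (-τ))^2)).mul_const η))).sub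
          (hasDerivAt_const ξ ((1 - Real.exp (-τ))*(1 + 3*Real.exp (-2*τ))*η^2)))
      refine h.congr_deriv ?_
      try simp only [id_eq]
      ring
    have hΦη : HasDerivAt (fun y => Φ τ ξ y)
        (-2*Real.sqrt 3*Real.exp (-τ)*(1-Real.exp (-τ))^2*ξ
          - 2*(1-Real.exp (-τ))*(1+3*Real.exp (-2*τ))*η) η := by
      simp only [Φ]
      have h := (((hasDerivAt_const η (-(1 - Real.exp (-τ))^3*ξ^2)).sub
          (((hasDerivAt_id η).const_mul
            (2*Real.sqrt 3*Real.exp (-τ)*(1 - Real.exp (-τ))^2*ξ)))).sub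
          ((hasDerivAt_pow 2 η).const_mul ((1 - Real.exp (-τ))*(1 + 3*Real.exp (-2*τ)))))
      refine h.congr_deriv ?_
      try simp only [id_eq]
      ring
    -- derivatives of ξ₀
    have hξ₀τ : HasDerivAt (fun t => ξ₀ t ξ η)
        ((3*ξ - Real.sqrt 3*η)/2 * (-(1/2) * Real.exp (-τ/2)) +
          (-ξ + Real.sqrt 3*η)/2 * (-(3/2) * Real.exp (-(3*τ)/2))) τ := by
      simp only [ξ₀]
      exact (hE.const_mul ((3*ξ - Real.sqrt 3*η)/2)).add (hE3.const_mul ((-ξ + Real.sqrt 3*η)/2))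
    have hξ₀ξ : HasDerivAt (fun x => ξ₀ τ x η)
        (3/2 * Real.exp (-τ/2) - 1/2 * Real.exp (-(3*τ)/2)) ξ := by
      simp only [ξ₀]
      have h := (((((hasDerivAt_id ξ).const_mul 3).sub_const (Real.sqrt 3*η)).div_const 2).mul_const
          (Real.exp (-τ/2))).add
        (((((hasDerivAt_id ξ).neg).add_const (Real.sqrt 3*η)).div_const 2).mul_const
          (Real.exp (-(3*τ)/2)))
      refine h.congr_deriv ?_
      try simp only [id_eq]
      ring
    have hξ₀η : HasDerivAt (fun y => ξ₀ τ ξ y)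
        (-(Real.sqrt 3)/2 * Real.exp (-τ/2) + Real.sqrt 3/2 * Real.exp (-(3*τ)/2)) η := by
      simp only [ξ₀]
      have h := (((((hasDerivAt_id η).const_mul (Real.sqrt 3)).const_sub (3*ξ)).div_const
          2).mul_const (Real.exp (-τ/2))).add
        (((((hasDerivAt_id η).const_mul (Real.sqrt 3)).const_add (-ξ)).div_const 2).mul_const
          (Real.exp (-(3*τ)/2)))
      refine h.congr_deriv ?_
      try simp only [id_eq]
      ring
    -- derivatives of η₀
    have hη₀τ : HasDerivAt (fun t => η₀ t ξ η)
        ((Real.sqrt 3*ξ - η)/2 * (-(1/2) * Real.exp (-τ/2)) +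
          (-(Real.sqrt 3)*ξ + 3*η)/2 * (-(3/2) * Real.exp (-(3*τ)/2))) τ := by
      simp only [η₀]
      exact (hE.const_mul ((Real.sqrt 3*ξ - η)/2)).add
        (hE3.const_mul ((-(Real.sqrt 3)*ξ + 3*η)/2))
    have hη₀ξ : HasDerivAt (fun x => η₀ τ x η)
        (Real.sqrt 3/2 * Real.exp (-τ/2) - Real.sqrt 3/2 * Real.exp (-(3*τ)/2)) ξ := by
      simp only [η₀]
      have h := (((((hasDerivAt_id ξ).const_mul (Real.sqrt 3)).sub_const η).div_const 2).mul_const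
          (Real.exp (-τ/2))).add
        (((((hasDerivAt_id ξ).const_mul (-(Real.sqrt 3))).add_const (3*η)).div_const 2).mul_const
          (Real.exp (-(3*τ)/2)))
      refine h.congr_deriv ?_
      try simp only [id_eq]
      ring
    have hη₀η : HasDerivAt (fun y => η₀ τ ξ y)
        (-(1/2) * Real.exp (-τ/2) + 3/2 * Real.exp (-(3*τ)/2)) η := by
      simp only [η₀]
      have h := ((((hasDerivAt_id η).const_sub (Real.sqrt 3*ξ)).div_const 2).mul_const
          (Real.exp (-τ/2))).add
        (((((hasDerivAt_id η).const_mul 3).const_add (-(Real.sqrt 3)*ξ)).div_const 2).mul_const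
          (Real.exp (-(3*τ)/2)))
      refine h.congr_deriv ?_
      try simp only [id_eq]
      ring
    -- complex derivatives of v
    have hvτ : HasDerivAt (fun t => ((Real.exp (Φ t ξ η) : ℝ) : ℂ) * F (ξ₀ t ξ η, η₀ t ξ η))
        (((Real.exp (Φ τ ξ η) *
            (-3*(1-Real.exp (-τ))^2*Real.exp (-τ)*ξ^2
              - 2*Real.sqrt 3*Real.exp (-τ)*(1-Real.exp (-τ))*(3*Real.exp (-τ)-1)*ξ*η
              - (Real.exp (-τ) + 9*Real.exp (-τ)*Real.exp (-2*τ)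
                  - 6*Real.exp (-2*τ))*η^2) : ℝ) : ℂ) * F (ξ₀ τ ξ η, η₀ τ ξ η) +
          ((Real.exp (Φ τ ξ η) : ℝ) : ℂ) *
            Lp ((3*ξ - Real.sqrt 3*η)/2 * (-(1/2) * Real.exp (-τ/2)) +
                  (-ξ + Real.sqrt 3*η)/2 * (-(3/2) * Real.exp (-(3*τ)/2)),
                (Real.sqrt 3*ξ - η)/2 * (-(1/2) * Real.exp (-τ/2)) +
                  (-(Real.sqrt 3)*ξ + 3*η)/2 * (-(3/2) * Real.exp (-(3*τ)/2)))) τ :=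
      (hΦτ.exp.ofReal_comp).mul (hLp.comp_hasDerivAt (l := F) τ (hξ₀τ.prodMk hη₀τ))
    have hvξ : HasDerivAt (fun x => ((Real.exp (Φ τ x η) : ℝ) : ℂ) * F (ξ₀ τ x η, η₀ τ x η))
        (((Real.exp (Φ τ ξ η) *
            (-2*(1-Real.exp (-τ))^3*ξ
              - 2*Real.sqrt 3*Real.exp (-τ)*(1-Real.exp (-τ))^2*η) : ℝ) : ℂ) *
            F (ξ₀ τ ξ η, η₀ τ ξ η) +
          ((Real.exp (Φ τ ξ η) : ℝ) : ℂ) *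
            Lp (3/2 * Real.exp (-τ/2) - 1/2 * Real.exp (-(3*τ)/2),
                Real.sqrt 3/2 * Real.exp (-τ/2) - Real.sqrt 3/2 * Real.exp (-(3*τ)/2))) ξ :=
      (hΦξ.exp.ofReal_comp).mul (hLp.comp_hasDerivAt (l := F) ξ (hξ₀ξ.prodMk hη₀ξ))
    have hvη : HasDerivAt (fun y => ((Real.exp (Φ τ ξ y) : ℝ) : ℂ) * F (ξ₀ τ ξ y, η₀ τ ξ y))
        (((Real.exp (Φ τ ξ η) *
            (-2*Real.sqrt 3*Real.exp (-τ)*(1-Real.exp (-τ))^2*ξ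
              - 2*(1-Real.exp (-τ))*(1+3*Real.exp (-2*τ))*η) : ℝ) : ℂ) *
            F (ξ₀ τ ξ η, η₀ τ ξ η) +
          ((Real.exp (Φ τ ξ η) : ℝ) : ℂ) *
            Lp (-(Real.sqrt 3)/2 * Real.exp (-τ/2) + Real.sqrt 3/2 * Real.exp (-(3*τ)/2),
                -(1/2) * Real.exp (-τ/2) + 3/2 * Real.exp (-(3*τ)/2))) η :=
      (hΦη.exp.ofReal_comp).mul (hLp.comp_hasDerivAt (l := F) η (hξ₀η.prodMk hη₀η))
    -- rewrite the goal
    have hτfun : (fun t => v t ξ η) =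
        fun t => ((Real.exp (Φ t ξ η) : ℝ) : ℂ) * F (ξ₀ t ξ η, η₀ t ξ η) :=
      funext fun t => hvfun t ξ η
    have hξfun : (fun x => v τ x η) =
        fun x => ((Real.exp (Φ τ x η) : ℝ) : ℂ) * F (ξ₀ τ x η, η₀ τ x η) :=
      funext fun x => hvfun τ x η
    have hηfun : (fun y => v τ ξ y) =
        fun y => ((Real.exp (Φ τ ξ y) : ℝ) : ℂ) * F (ξ₀ τ ξ y, η₀ τ ξ y) :=
      funext fun y => hvfun τ ξ y
    rw [hτfun, hξfun, hηfun, hvfun τ ξ η, hvτ.deriv, hvξ.deriv, hvη.deriv]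
    -- the transported point is constant along the flow
    have hw : ((3*ξ - Real.sqrt 3*η)/2 * (-(1/2) * Real.exp (-τ/2)) +
            (-ξ + Real.sqrt 3*η)/2 * (-(3/2) * Real.exp (-(3*τ)/2)),
          (Real.sqrt 3*ξ - η)/2 * (-(1/2) * Real.exp (-τ/2)) +
            (-(Real.sqrt 3)*ξ + 3*η)/2 * (-(3/2) * Real.exp (-(3*τ)/2))) +
        (Real.sqrt 3/2*η) • (3/2 * Real.exp (-τ/2) - 1/2 * Real.exp (-(3*τ)/2),
          Real.sqrt 3/2 * Real.exp (-τ/2) - Real.sqrt 3/2 * Real.exp (-(3*τ)/2)) +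
        (2*η - Real.sqrt 3/2*ξ) •
          (-(Real.sqrt 3)/2 * Real.exp (-τ/2) + Real.sqrt 3/2 * Real.exp (-(3*τ)/2),
            -(1/2) * Real.exp (-τ/2) + 3/2 * Real.exp (-(3*τ)/2)) = (0 : ℝ × ℝ) := by
      rw [Prod.ext_iff]
      simp only [Prod.smul_mk, Prod.mk_add_mk, smul_eq_mul, Prod.fst_zero, Prod.snd_zero]
      constructor
      · linear_combination ((Real.exp (-τ/2) - Real.exp (-(3*τ)/2))*ξ/4) * hs
      · linear_combination ((Real.exp (-τ/2) - Real.exp (-(3*τ)/2))*η/4) * hs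
    have hLsum : Lp ((3*ξ - Real.sqrt 3*η)/2 * (-(1/2) * Real.exp (-τ/2)) +
            (-ξ + Real.sqrt 3*η)/2 * (-(3/2) * Real.exp (-(3*τ)/2)),
          (Real.sqrt 3*ξ - η)/2 * (-(1/2) * Real.exp (-τ/2)) +
            (-(Real.sqrt 3)*ξ + 3*η)/2 * (-(3/2) * Real.exp (-(3*τ)/2))) +
        ((Real.sqrt 3/2*η : ℝ) : ℂ) *
          Lp (3/2 * Real.exp (-τ/2) - 1/2 * Real.exp (-(3*τ)/2),
            Real.sqrt 3/2 * Real.exp (-τ/2) - Real.sqrt 3/2 * Real.exp (-(3*τ)/2)) +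
        ((2*η - Real.sqrt 3/2*ξ : ℝ) : ℂ) *
          Lp (-(Real.sqrt 3)/2 * Real.exp (-τ/2) + Real.sqrt 3/2 * Real.exp (-(3*τ)/2),
            -(1/2) * Real.exp (-τ/2) + 3/2 * Real.exp (-(3*τ)/2)) = 0 := by
      rw [← Complex.real_smul, ← Complex.real_smul, ← _root_.map_smul, ← _root_.map_smul, ← map_add, ← map_add,
        hw, map_zero]
    -- the scalar identity
    have he2' : Real.exp (-2*τ) = Real.exp (-τ) * Real.exp (-τ) := by
      rw [← Real.exp_add]; ring_nf
    have hscal : (-3*(1-Real.exp (-τ))^2*Real.exp (-τ)*ξ^2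
          - 2*Real.sqrt 3*Real.exp (-τ)*(1-Real.exp (-τ))*(3*Real.exp (-τ)-1)*ξ*η
          - (Real.exp (-τ) + 9*Real.exp (-τ)*Real.exp (-2*τ) - 6*Real.exp (-2*τ))*η^2) +
        (Real.sqrt 3/2*η) * (-2*(1-Real.exp (-τ))^3*ξ
          - 2*Real.sqrt 3*Real.exp (-τ)*(1-Real.exp (-τ))^2*η) +
        (2*η - Real.sqrt 3/2*ξ) * (-2*Real.sqrt 3*Real.exp (-τ)*(1-Real.exp (-τ))^2*ξ
          - 2*(1-Real.exp (-τ))*(1+3*Real.exp (-2*τ))*η) = -4*η^2 := by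
      linear_combination
        (Real.exp (-τ)*ξ^2 - Real.exp (-τ)*η^2 - 2*Real.exp (-τ)^2*ξ^2 + 2*Real.exp (-τ)^2*η^2
          + Real.exp (-τ)^3*ξ^2 - Real.exp (-τ)^3*η^2) * hs +
        (-6*η^2 + 3*Real.exp (-τ)*η^2 + 3*Real.sqrt 3*ξ*η - 3*Real.sqrt 3*Real.exp (-τ)*ξ*η)
          * he2'
    have hscalC := congrArg (fun r : ℝ => (r : ℂ)) hscal
    push_cast at hscalC hLsum ⊢
    linear_combination (Complex.exp ((Φ τ ξ η : ℝ) : ℂ)) * hLsum +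
      ((Complex.exp ((Φ τ ξ η : ℝ) : ℂ)) * F (ξ₀ τ ξ η, η₀ τ ξ η)) * hscalC
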